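/- Let n ≥ 5 and let H be a Hamiltonian cycle of the complete graph K_n. Then the graph G = K_n − H (the complete graph with the edges of H removed, i.e. the complement of the cycle C_n) is 2-swappable. -/

import Mathlib

open SimpleGraph
open scoped Classical

set_option linter.unusedSectionVars false
set_option linter.unusedTactic false

/-- A finite simple graph `G` is 2-swappable if for every edge `e` of `G` there exist a set
`A` of edges of `G` with `e ∈ A` and `|A| ≤ 2`, and a set `B` of edges of the complement of
`G`, such that deleting the edges in `A` and adding the edges in `B` yields a graph
isomorphic to `G`. -/
def TwoSwappable {V : Type} (G : SimpleGraph V) : Prop :=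
  ∀ e ∈ G.edgeSet, ∃ A B : Set (Sym2 V),
    e ∈ A ∧ A ⊆ G.edgeSet ∧ A.ncard ≤ 2 ∧ B ⊆ Gᶜ.edgeSet ∧
    Nonempty ((G.deleteEdges A ⊔ SimpleGraph.fromEdgeSet B) ≃g G)


section helpers
variable {n : ℕ} [NeZero n]

lemma myval_one (hn : 5 ≤ n) : (1 : Fin n).val = 1 := by
  rw [Fin.val_one']; exact Nat.mod_eq_of_lt (by omega)

lemma myval_add_one (hn : 5 ≤ n) (x : Fin n) :
    (x + 1).val = if x.val + 1 = n then 0 else x.val + 1 := by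
  rw [Fin.val_add, myval_one hn]
  split_ifs with h
  · rw [h, Nat.mod_self]
  · exact Nat.mod_eq_of_lt (by have := x.isLt; omega)

def rmap (n d : ℕ) (h : d + 2 ≤ n) : Fin n → Fin n := fun w =>
  if _ : 1 ≤ w.val ∧ w.val ≤ d then ⟨d + 1 - w.val, by omega⟩ else w

omit [NeZero n] in
lemma rmap_val (d : ℕ) (h : d + 2 ≤ n) (w : Fin n) :
    (rmap n d h w).val = if 1 ≤ w.val ∧ w.val ≤ d then d + 1 - w.val else w.val := by
  rw [rmap]; split_ifs <;> rfl

omit [NeZero n] in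
lemma rmap_invol (d : ℕ) (h : d + 2 ≤ n) : Function.Involutive (rmap n d h) := by
  intro w
  have h1 := (rmap n d h w).isLt
  have h2 := w.isLt
  apply Fin.ext
  rw [rmap_val, rmap_val]
  split_ifs <;> omega

set_option maxHeartbeats 2000000 in
lemma keyLemma (hn : 5 ≤ n) {d : ℕ} (hd2 : 2 ≤ d) (h : d + 2 ≤ n) (w : Fin n)
    (hw : w.val = d) (u v : Fin n) :
    (rmap n d h u ≠ rmap n d h v ∧ rmap n d h v ≠ rmap n d h u + 1 ∧
      rmap n d h u ≠ rmap n d h v + 1) ↔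
    (((u ≠ v ∧ v ≠ u + 1 ∧ u ≠ v + 1) ∧
        ¬(((u = 0 ∧ v = w) ∨ (u = w ∧ v = 0)) ∨ ((u = 1 ∧ v = w + 1) ∨ (u = w + 1 ∧ v = 1)))) ∨
      ((((u = 0 ∧ v = 1) ∨ (u = 1 ∧ v = 0)) ∨ ((u = w ∧ v = w + 1) ∨ (u = w + 1 ∧ v = w))) ∧
        u ≠ v)) := by
  have hu := u.isLt
  have hv := v.isLt
  simp only [ne_eq, Fin.ext_iff, myval_add_one hn, rmap_val, Fin.val_zero, myval_one hn, hw]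
  split_ifs <;> omega

-- walk helpers
lemma support_get {V : Type} {G : SimpleGraph V} {u v : V} (q : G.Walk u v) (i : ℕ)
    (h : i < q.support.length) : q.support.get ⟨i, h⟩ = q.getVert i := by
  induction q generalizing i with
  | nil =>
    simp only [SimpleGraph.Walk.support_nil, List.length_cons, List.length_nil] at h
    interval_cases i
    · rfl
  | cons hadj q ih =>
    cases i with
    | zero => rfl
    | succ m =>
      simp only [SimpleGraph.Walk.support_cons, List.get_cons_succ,
        SimpleGraph.Walk.getVert_cons_succ]
      exact ih m _

lemma mem_edges_iff' {V : Type} {G : SimpleGraph V} {u v : V} (q : G.Walk u v) (s : Sym2 V) :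
    s ∈ q.edges ↔ ∃ m, m < q.length ∧ s = s(q.getVert m, q.getVert (m + 1)) := by
  induction q with
  | nil => simp
  | cons hadj q ih =>
    simp only [SimpleGraph.Walk.edges_cons, List.mem_cons, ih, SimpleGraph.Walk.length_cons]
    constructor
    · rintro (rfl | ⟨m, hm, rfl⟩)
      · exact ⟨0, by omega, by simp [SimpleGraph.Walk.getVert_cons_succ]⟩
      · exact ⟨m + 1, by omega, by simp [SimpleGraph.Walk.getVert_cons_succ]⟩
    · rintro ⟨m, hm, rfl⟩
      cases m with
      | zero => left; simp [SimpleGraph.Walk.getVert_cons_succ]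
      | succ m => right; exact ⟨m, by omega, by simp [SimpleGraph.Walk.getVert_cons_succ]⟩

end helpers

/-- If `n ≥ 5` and `H` is a Hamiltonian cycle of the complete graph `K_n`, then
`K_n - H` (the complement of the `n`-cycle) is 2-swappable. -/
theorem stmt_3 (n : ℕ) (hn : 5 ≤ n) (a : Fin n)
    (p : (⊤ : SimpleGraph (Fin n)).Walk a a) (hp : p.IsHamiltonianCycle) :
    TwoSwappable ((⊤ : SimpleGraph (Fin n)) \
      SimpleGraph.fromEdgeSet {e | e ∈ p.edges}) := by
  haveI : NeZero n := ⟨by omega⟩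
  set G := (⊤ : SimpleGraph (Fin n)) \ SimpleGraph.fromEdgeSet {e | e ∈ p.edges} with hG
  set f : Fin n → Fin n := fun k => p.getVert k.val with hf
  have hnil : ¬ p.Nil := hp.isCycle.not_nil
  have hlen : p.length = n := by simpa using hp.length_eq
  -- injectivity
  have htp : p.tail.IsPath := hp.isHamiltonian_tail.isPath
  have htlen : p.tail.length = n - 1 := by
    have := p.length_tail_add_one hnil
    omega
  have tinj : ∀ a' b' : ℕ, a' ≤ p.tail.length → b' ≤ p.tail.length →
      p.tail.getVert a' = p.tail.getVert b' → a' = b' := by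
    intro a' b' ha hb hab
    have hsl : p.tail.support.length = p.tail.length + 1 := p.tail.length_support
    have ha' : a' < p.tail.support.length := by omega
    have hb' : b' < p.tail.support.length := by omega
    rw [← support_get p.tail a' ha', ← support_get p.tail b' hb'] at hab
    have := (List.Nodup.get_inj_iff htp.support_nodup).mp hab
    exact congrArg Fin.val this
  have key : ∀ m m' : ℕ, 1 ≤ m → 1 ≤ m' → m ≤ n → m' ≤ n →
      p.getVert m = p.getVert m' → m = m' := by
    intro m m' h1 h1' h2 h2' hmm
    have e1 : p.tail.getVert (m - 1) = p.getVert m := by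
      rw [p.getVert_tail]; congr 1; omega
    have e2 : p.tail.getVert (m' - 1) = p.getVert m' := by
      rw [p.getVert_tail]; congr 1; omega
    have := tinj (m - 1) (m' - 1) (by omega) (by omega) (by rw [e1, e2]; exact hmm)
    omega
  have hvn : p.getVert n = a := p.getVert_of_length_le (by omega)
  have hfinj : Function.Injective f := by
    intro k k' hkk'
    simp only [hf] at hkk'
    have hk := k.isLt
    have hk' := k'.isLt
    by_cases h0 : k.val = 0 <;> by_cases h0' : k'.val = 0
    · exact Fin.ext (by omega)
    · exfalso
      rw [h0, p.getVert_zero] at hkk'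
      have := key n k'.val (by omega) (by omega) le_rfl (by omega) (by rw [hvn]; exact hkk')
      omega
    · exfalso
      rw [h0', p.getVert_zero] at hkk'
      have := key k.val n (by omega) (by omega) (by omega) le_rfl (by rw [hvn]; exact hkk')
      omega
    · exact Fin.ext (key k.val k'.val (by omega) (by omega) (by omega) (by omega) hkk')
  have hfsur : Function.Surjective f := by
    intro x
    have hx := Walk.mem_support_iff_exists_getVert.mp (hp.mem_support x)
    obtain ⟨m, hm1, hm2⟩ := hx
    rw [hlen] at hm2
    rcases Nat.lt_or_ge m n with hlt | hge
    · exact ⟨⟨m, hlt⟩, hm1⟩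
    · refine ⟨⟨0, by omega⟩, ?_⟩
      have hmn : m = n := by omega
      show p.getVert 0 = x
      rw [hmn] at hm1
      exact (p.getVert_zero).trans (hvn.symm.trans hm1)
  -- successor
  have hsucc : ∀ k : Fin n, f (k + 1) = p.getVert (k.val + 1) := by
    intro k
    simp only [hf]
    rw [myval_add_one hn]
    split_ifs with hc
    · rw [p.getVert_zero, hc]
      exact hvn.symm
    · rfl
  -- edges characterization
  have hedge : ∀ x y : Fin n, (s(x, y) ∈ p.edges ↔ ∃ k : Fin n, s(x, y) = s(f k, f (k + 1))) := by
    intro x y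
    rw [mem_edges_iff']
    constructor
    · rintro ⟨m, hm, hs⟩
      rw [hlen] at hm
      refine ⟨⟨m, hm⟩, ?_⟩
      rw [hsucc]
      exact hs
    · rintro ⟨k, hk⟩
      have := k.isLt
      exact ⟨k.val, by omega, by rw [hk, hsucc k]⟩
  -- adjacency characterization
  have hGadj : ∀ s t : Fin n, G.Adj (f s) (f t) ↔ (s ≠ t ∧ t ≠ s + 1 ∧ s ≠ t + 1) := by
    intro s t
    rw [hG]
    simp only [sdiff_adj, top_adj, fromEdgeSet_adj, Set.mem_setOf_eq, ne_eq, hfinj.ne_iff]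
    constructor
    · rintro ⟨hst, hne⟩
      refine ⟨hst, ?_, ?_⟩
      · intro hteq
        exact hne ⟨(hedge _ _).mpr ⟨s, by rw [hteq]⟩, hst⟩
      · intro hseq
        exact hne ⟨(hedge _ _).mpr ⟨t, by rw [hseq, Sym2.eq_swap]⟩, hst⟩
    · rintro ⟨hst, h1, h2⟩
      refine ⟨hst, ?_⟩
      rintro ⟨hmem, -⟩
      obtain ⟨k, hk⟩ := (hedge _ _).mp hmem
      rw [Sym2.eq_iff] at hk
      rcases hk with ⟨hk1, hk2⟩ | ⟨hk1, hk2⟩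
      · exact h1 (by rw [hfinj hk2, ← hfinj hk1])
      · exact h2 (by rw [hfinj hk1, ← hfinj hk2])
  -- main construction
  intro e he
  obtain ⟨⟨x, y⟩, rfl⟩ := e.exists_rep
  have he' : G.Adj x y := G.mem_edgeSet.mp he
  obtain ⟨i, rfl⟩ := hfsur x
  obtain ⟨j, rfl⟩ := hfsur y
  obtain ⟨w, rfl⟩ : ∃ w, j = w + i := ⟨j - i, (sub_add_cancel j i).symm⟩
  obtain ⟨hij1, hij2, hij3⟩ := (hGadj i (w + i)).mp he'
  set d : ℕ := w.val with hwd
  have hw : w.val = d := rfl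
  have hwlt := w.isLt
  -- conditions on d
  have hd0 : w ≠ 0 := by
    intro h0; rw [h0, zero_add] at hij1; exact hij1 rfl
  have hd1 : w ≠ 1 := by
    intro h1; rw [h1, add_comm 1 i] at hij2; exact hij2 rfl
  have hdm : w + 1 ≠ 0 := by
    intro hm
    apply hij3
    rw [add_right_comm w i 1, hm, zero_add]
  have hd2 : 2 ≤ d := by
    have e0 : w.val ≠ 0 := fun h => hd0 (Fin.ext (by rw [h]; rfl))
    have e1 : w.val ≠ 1 := fun h => hd1 (Fin.ext (by rw [h, myval_one hn]))
    omega
  have hdn : d + 2 ≤ n := by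
    have : (w + 1).val ≠ 0 := fun h => hdm (Fin.ext (by rw [h]; rfl))
    rw [myval_add_one hn] at this
    split_ifs at this with hc
    · exact absurd rfl this
    · omega
  -- the sets
  refine ⟨{s(f i, f (w + i)), s(f (1 + i), f (w + 1 + i))},
    {s(f i, f (1 + i)), s(f (w + i), f (w + 1 + i))}, ?_, ?_, ?_, ?_, ?_⟩
  · exact Set.mem_insert _ _
  · rintro s hs
    rcases Set.mem_insert_iff.mp hs with rfl | hs
    · exact G.mem_edgeSet.mpr he'
    · rw [Set.mem_singleton_iff] at hs
      subst hs
      refine G.mem_edgeSet.mpr ((hGadj _ _).mpr ⟨?_, ?_, ?_⟩)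
      · intro hh
        rw [add_assoc] at hh
        exact hd0 (add_eq_right.mp hh.symm)
      · intro hh
        rw [add_right_comm 1 i 1] at hh
        have h2 := add_left_inj i |>.mp hh
        exact hd1 (add_left_inj 1 |>.mp h2)
      · intro hh
        rw [add_right_comm (w + 1) i 1] at hh
        have h2 := add_left_inj i |>.mp hh
        have h4 : (0 : Fin n) + 1 = w + 1 + 1 := by rw [zero_add]; exact h2
        exact hdm ((add_left_inj 1 |>.mp h4).symm)
  · exact le_trans (Set.ncard_insert_le _ _) (by simp)
  · rintro s hs
    have hk1 : ∀ k : Fin n, k ≠ k + 1 := by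
      intro k hk
      have := congrArg Fin.val hk
      rw [myval_add_one hn] at this
      have := k.isLt
      split_ifs at * <;> omega
    rcases Set.mem_insert_iff.mp hs with rfl | hs
    · refine (mem_edgeSet Gᶜ).mpr ((compl_adj G _ _).mpr ⟨?_, ?_⟩)
      · rw [add_comm 1 i]
        exact hfinj.ne_iff.mpr (hk1 i)
      · rw [add_comm 1 i]
        intro hadj
        exact (hGadj _ _).mp hadj |>.2.1 rfl
    · rw [Set.mem_singleton_iff] at hs
      subst hs
      refine (mem_edgeSet Gᶜ).mpr ((compl_adj G _ _).mpr ⟨?_, ?_⟩)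
      · rw [add_right_comm w 1 i]
        exact hfinj.ne_iff.mpr (hk1 (w + i))
      · rw [add_right_comm w 1 i]
        intro hadj
        exact (hGadj _ _).mp hadj |>.2.1 rfl
  · -- the isomorphism
    have hrinv := rmap_invol (n := n) d hdn
    have hρinv : Function.Involutive (fun k : Fin n => rmap n d hdn (k - i) + i) := by
      intro k
      simp only [add_sub_cancel_right]
      rw [hrinv, sub_add_cancel]
    set σ : Fin n ≃ Fin n :=
      (Equiv.ofBijective f ⟨hfinj, hfsur⟩).symm.trans
        ((hρinv.toPerm _).trans (Equiv.ofBijective f ⟨hfinj, hfsur⟩)) with hσdef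
    have hσ : ∀ k : Fin n, σ (f k) = f (rmap n d hdn (k - i) + i) := by
      intro k
      simp only [hσdef, Equiv.trans_apply]
      congr 1
      · have : (Equiv.ofBijective f ⟨hfinj, hfsur⟩).symm (f k) = k := by
          apply hfinj
          exact (Equiv.ofBijective f ⟨hfinj, hfsur⟩).apply_symm_apply (f k)
        rw [this]
        rfl
    refine ⟨⟨σ, ?_⟩⟩
    intro x y
    obtain ⟨s, rfl⟩ := hfsur x
    obtain ⟨t, rfl⟩ := hfsur y
    obtain ⟨u', rfl⟩ : ∃ u', s = u' + i := ⟨s - i, (sub_add_cancel s i).symm⟩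
    obtain ⟨v', rfl⟩ : ∃ v', t = v' + i := ⟨t - i, (sub_add_cancel t i).symm⟩
    rw [hσ, hσ]
    simp only [add_sub_cancel_right]
    simp only [sup_adj, deleteEdges_adj, fromEdgeSet_adj, Set.mem_insert_iff,
      Set.mem_singleton_iff, Sym2.eq_iff, hGadj, hfinj.eq_iff, ne_eq, hfinj.ne_iff]
    simp only [add_right_comm _ i 1, add_left_inj, add_eq_right]
    exact keyLemma hn hd2 hdn w hw u' v'
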